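/- Let (X, f, μ) be an ergodic measure-preserving system and E measurable with μ(E) > 0. Suppose for some ε ∈ (0, 1/4) there is a set K of positive measure such that for all x ∈ K, liminf_{n→∞} m_n(x)/n < 1 − 4ε, where m_n(x) = max{0 ≤ k < n : f^k(x) ∈ E} ∪ {0}. Then there exist N ∈ ℕ and K' ⊆ K with μ(K') > 0 such that for all n > N and x ∈ K', the visit count #{0 ≤ i < n : f^i(x) ∈ E} lies in (n(1−ε)μ(E), n((1−2ε)/(1−3ε))μ(E)), and this leads to a contradiction; hence no such K of positive measure exists. -/

import Mathlib

open MeasureTheory Filter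
open scoped Classical

section BirkhoffAux

variable {X : Type*} [MeasurableSpace X]

/-- Iterated maximum used in Garsia's proof of the maximal ergodic theorem:
`ergMax f g N x = max (0, S₁ x, …, S_N x)` where `Sₙ` is the Birkhoff sum. -/
noncomputable def ergMax (f : X → X) (g : X → ℝ) : ℕ → X → ℝ
  | 0 => fun _ => 0
  | N + 1 => fun x => max 0 (g x + ergMax f g N (f x))

variable {f : X → X} {g : X → ℝ}

lemma ergMax_nonneg (N : ℕ) (x : X) : 0 ≤ ergMax f g N x := by
  cases N with
  | zero => simp [ergMax]
  | succ N => exact le_max_left _ _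

lemma ergMax_succ (N : ℕ) (x : X) :
    ergMax f g (N + 1) x = max 0 (g x + ergMax f g N (f x)) := rfl

lemma ergMax_mono (N : ℕ) (x : X) : ergMax f g N x ≤ ergMax f g (N + 1) x := by
  induction N generalizing x with
  | zero => exact ergMax_nonneg 1 x
  | succ N ih =>
      rw [ergMax_succ, ergMax_succ]
      exact max_le_max le_rfl (add_le_add le_rfl (ih (f x)))

lemma measurable_ergMax (hf : Measurable f) (hg : Measurable g) (N : ℕ) :
    Measurable (ergMax f g N) := by
  induction N with
  | zero => simpa [ergMax] using measurable_const
  | succ N ih => exact measurable_const.max (hg.add (ih.comp hf))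

lemma ergMax_le {C : ℝ} (hC : ∀ x, g x ≤ C) (hC0 : 0 ≤ C) (N : ℕ) (x : X) :
    ergMax f g N x ≤ N * C := by
  induction N generalizing x with
  | zero => simp [ergMax]
  | succ N ih =>
      rw [ergMax_succ]
      refine max_le (by positivity) ?_
      have := ih (f x)
      have := hC x
      push_cast
      nlinarith

lemma birkhoffSum_le_ergMax {N n : ℕ} (hn : n ≤ N) (x : X) :
    birkhoffSum f g n x ≤ ergMax f g N x := by
  induction N generalizing n x with
  | zero =>
      have : n = 0 := Nat.le_zero.mp hn
      simp [this, birkhoffSum_zero, ergMax]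
  | succ N ih =>
      cases n with
      | zero => simpa [birkhoffSum_zero] using ergMax_nonneg (N + 1) x
      | succ m =>
          rw [birkhoffSum_succ']
          have h1 : birkhoffSum f g m (f x) ≤ ergMax f g N (f x) :=
            ih (Nat.succ_le_succ_iff.mp hn) (f x)
          rw [ergMax_succ]
          exact le_max_of_le_right (by linarith)

lemma exists_le_birkhoffSum (N : ℕ) (x : X) :
    ∃ n ≤ N, ergMax f g N x ≤ birkhoffSum f g n x := by
  induction N generalizing x with
  | zero => exact ⟨0, le_rfl, by simp [ergMax, birkhoffSum_zero]⟩
  | succ N ih =>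
      rcases le_or_gt (ergMax f g (N + 1) x) 0 with h | h
      · exact ⟨0, Nat.zero_le _, by simpa [birkhoffSum_zero] using h⟩
      · have ha : 0 < g x + ergMax f g N (f x) := by
          by_contra ha
          push_neg at ha
          rw [ergMax_succ, max_eq_left ha] at h
          exact lt_irrefl _ h
        have heq : ergMax f g (N + 1) x = g x + ergMax f g N (f x) := by
          rw [ergMax_succ]; exact max_eq_right ha.le
        rcases ih (f x) with ⟨m, hm, hle⟩
        refine ⟨m + 1, Nat.succ_le_succ hm, ?_⟩
        rw [heq, birkhoffSum_succ']
        linarith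

end BirkhoffAux

section Max
variable {X : Type*} [MeasurableSpace X] {f : X → X} {g : X → ℝ}

lemma integrable_of_bound {μ : Measure X} [IsFiniteMeasure μ] {h : X → ℝ}
    (hh : Measurable h) (B : ℝ) (hB : ∀ x, |h x| ≤ B) : Integrable h μ :=
  (integrable_const B).mono' hh.aestronglyMeasurable
    (Eventually.of_forall fun x => by simpa [Real.norm_eq_abs] using hB x)

lemma measurable_birkhoffSum (hf : Measurable f) (hg : Measurable g) (n : ℕ) :
    Measurable (fun x => birkhoffSum f g n x) :=
  Finset.measurable_sum _ fun k _ => hg.comp (hf.iterate k)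

/-- **Maximal ergodic theorem** (Garsia's proof). -/
theorem maximal_ergodic {μ : Measure X} [IsProbabilityMeasure μ]
    (hf : MeasurePreserving f μ μ) (hg : Measurable g) {C : ℝ}
    (hC : ∀ x, |g x| ≤ C) :
    0 ≤ ∫ x in {x | ∃ n, 0 < birkhoffSum f g n x}, g x ∂μ := by
  have hne : Nonempty X := by
    by_contra h
    rw [not_nonempty_iff] at h
    have h1 := measure_univ (μ := μ)
    rw [Set.univ_eq_empty_iff.mpr h, measure_empty] at h1
    exact zero_ne_one h1
  obtain ⟨x₀⟩ := hne
  have hC0 : 0 ≤ C := le_trans (abs_nonneg _) (hC x₀)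
  have hgC : ∀ x, g x ≤ C := fun x => le_of_abs_le (hC x)
  have hint_g : Integrable g μ := integrable_of_bound hg C hC
  have hmP : ∀ N, Measurable (ergMax f g N) := measurable_ergMax hf.measurable hg
  have habsP : ∀ N x, |ergMax f g N x| ≤ N * C := fun N x => by
    rw [abs_of_nonneg (ergMax_nonneg N x)]; exact ergMax_le hgC hC0 N x
  have hint_P : ∀ N, Integrable (ergMax f g N) μ := fun N =>
    integrable_of_bound (hmP N) (N * C) (habsP N)
  have hint_Pf : ∀ N, Integrable (fun x => ergMax f g N (f x)) μ := fun N =>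
    integrable_of_bound ((hmP N).comp hf.measurable) (N * C) fun x => habsP N (f x)
  set A : ℕ → Set X := fun N => {x | 0 < ergMax f g N x} with hA_def
  have hAm : ∀ N, MeasurableSet (A N) := fun N => measurableSet_lt measurable_const (hmP N)
  have hAmono : Monotone A := monotone_nat_of_le_succ fun N x hx =>
    lt_of_lt_of_le hx (ergMax_mono N x)
  have hAunion : (⋃ N, A N) = {x | ∃ n, 0 < birkhoffSum f g n x} := by
    ext x
    simp only [Set.mem_iUnion, Set.mem_setOf_eq]
    constructor
    · rintro ⟨N, hx⟩
      obtain ⟨n, _, hle⟩ := exists_le_birkhoffSum N x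
      exact ⟨n, lt_of_lt_of_le hx hle⟩
    · rintro ⟨n, hn⟩
      exact ⟨n, lt_of_lt_of_le hn (birkhoffSum_le_ergMax le_rfl x)⟩
  have hPcomp : ∀ N, ∫ x, ergMax f g N (f x) ∂μ = ∫ x, ergMax f g N x ∂μ := by
    intro N
    calc ∫ x, ergMax f g N (f x) ∂μ
        = ∫ y, ergMax f g N y ∂(Measure.map f μ) :=
          (integral_map hf.measurable.aemeasurable (hmP N).aestronglyMeasurable).symm
      _ = ∫ y, ergMax f g N y ∂μ := by rw [hf.map_eq]
  have key : ∀ N, 0 ≤ ∫ x in A N, g x ∂μ := by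
    intro N
    cases N with
    | zero =>
        have : A 0 = ∅ := by
          ext x; simp [hA_def, ergMax]
        simp [this]
    | succ N =>
        have heq : ∀ x ∈ A (N + 1), g x = ergMax f g (N + 1) x - ergMax f g N (f x) := by
          intro x hx
          have hx' : 0 < ergMax f g (N + 1) x := hx
          have ha : 0 < g x + ergMax f g N (f x) := by
            by_contra ha
            push_neg at ha
            rw [ergMax_succ, max_eq_left ha] at hx'
            exact lt_irrefl _ hx'
          rw [ergMax_succ, max_eq_right ha.le]
          ring
        have h0 : ∫ x in A (N + 1), g x ∂μ
            = ∫ x in A (N + 1), (ergMax f g (N + 1) x - ergMax f g N (f x)) ∂μ :=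
          setIntegral_congr_fun (hAm (N + 1)) heq
        have h1 : ∫ x in A (N + 1), (ergMax f g (N + 1) x - ergMax f g N (f x)) ∂μ
            = (∫ x in A (N + 1), ergMax f g (N + 1) x ∂μ)
              - ∫ x in A (N + 1), ergMax f g N (f x) ∂μ :=
          integral_sub (hint_P (N + 1)).integrableOn (hint_Pf N).integrableOn
        have h2 : ∫ x in A (N + 1), ergMax f g (N + 1) x ∂μ = ∫ x, ergMax f g (N + 1) x ∂μ := by
          rw [← integral_add_compl (hAm (N + 1)) (hint_P (N + 1))]
          have hz : ∫ x in (A (N + 1))ᶜ, ergMax f g (N + 1) x ∂μ = 0 :=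
            setIntegral_eq_zero_of_forall_eq_zero fun x hx =>
              le_antisymm (not_lt.mp hx) (ergMax_nonneg _ _)
          rw [hz, add_zero]
        have h3 : ∫ x in A (N + 1), ergMax f g N (f x) ∂μ ≤ ∫ x, ergMax f g N (f x) ∂μ :=
          setIntegral_le_integral (hint_Pf N) (Eventually.of_forall fun x => ergMax_nonneg _ _)
        have h4 : ∫ x, ergMax f g N x ∂μ ≤ ∫ x, ergMax f g (N + 1) x ∂μ :=
          integral_mono (hint_P N) (hint_P (N + 1)) fun x => ergMax_mono N x
        rw [h0, h1, h2]
        rw [hPcomp N] at h3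
        linarith
  have htend := tendsto_setIntegral_of_monotone hAm hAmono
    (hAunion ▸ hint_g.integrableOn : IntegrableOn g (⋃ N, A N) μ)
  rw [hAunion] at htend
  exact ge_of_tendsto' htend key

end Max

section LimsupHelpers

/-- One-sided comparison of limsups for sequences whose difference tends to zero. -/
lemma limsup_le_limsup_of_tendsto_sub {u v : ℕ → ℝ} {B : ℝ}
    (hu : ∀ n, |u n| ≤ B) (hv : ∀ n, |v n| ≤ B)
    (h : Tendsto (fun n => u n - v n) atTop (nhds 0)) :
    limsup u atTop ≤ limsup v atTop := by
  have hbu_ge : IsBoundedUnder (· ≥ ·) atTop u :=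
    isBoundedUnder_of ⟨-B, fun n => neg_le_of_abs_le (hu n)⟩
  have hbv_le : IsBoundedUnder (· ≤ ·) atTop v :=
    isBoundedUnder_of ⟨B, fun n => le_of_abs_le (hv n)⟩
  refine le_of_forall_pos_le_add fun ε hε => ?_
  have h1 : ∀ᶠ n in atTop, u n - v n < ε / 2 :=
    h.eventually (gt_mem_nhds (by linarith))
  have h2 : ∀ᶠ n in atTop, v n < limsup v atTop + ε / 2 :=
    eventually_lt_of_limsup_lt (by linarith) hbv_le
  have h3 : ∀ᶠ n in atTop, u n ≤ limsup v atTop + ε := by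
    filter_upwards [h1, h2] with n hn1 hn2
    linarith
  exact limsup_le_of_le hbu_ge.isCoboundedUnder_le h3

lemma limsup_eq_limsup_of_tendsto_sub {u v : ℕ → ℝ} {B : ℝ}
    (hu : ∀ n, |u n| ≤ B) (hv : ∀ n, |v n| ≤ B)
    (h : Tendsto (fun n => u n - v n) atTop (nhds 0)) :
    limsup u atTop = limsup v atTop := by
  refine le_antisymm (limsup_le_limsup_of_tendsto_sub hu hv h) ?_
  refine limsup_le_limsup_of_tendsto_sub hv hu ?_
  have := h.neg
  simp only [neg_zero] at this
  convert this using 2 with n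
  ring

end LimsupHelpers

section Core
variable {X : Type*} [MeasurableSpace X] {f : X → X} {g : X → ℝ}

lemma abs_birkhoffSum_le {C : ℝ} (hC : ∀ x, |g x| ≤ C) (n : ℕ) (x : X) :
    |birkhoffSum f g n x| ≤ n * C := by
  calc |birkhoffSum f g n x| ≤ ∑ k ∈ Finset.range n, |g (f^[k] x)| :=
        Finset.abs_sum_le_sum_abs _ _
    _ ≤ ∑ _k ∈ Finset.range n, C := Finset.sum_le_sum fun k _ => hC _
    _ = n * C := by simp [mul_comm]

lemma abs_birkhoffAvg_le {C : ℝ} (hC : ∀ x, |g x| ≤ C) (hC0 : 0 ≤ C) (n : ℕ) (x : X) :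
    |birkhoffSum f g n x / n| ≤ C := by
  rcases Nat.eq_zero_or_pos n with rfl | hn
  · simpa [birkhoffSum_zero] using hC0
  · have hn' : (0:ℝ) < n := by exact_mod_cast hn
    rw [abs_div, abs_of_pos hn', div_le_iff₀ hn']
    calc |birkhoffSum f g n x| ≤ n * C := abs_birkhoffSum_le hC n x
      _ = C * n := mul_comm _ _

/-- A.e. bound on the limsup of Birkhoff averages, from the maximal ergodic theorem. -/
theorem ae_limsup_birkhoff_le {μ : Measure X} [IsProbabilityMeasure μ]
    (hf : Ergodic f μ) (hg : Measurable g) {C : ℝ} (hC : ∀ x, |g x| ≤ C) :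
    ∀ᵐ x ∂μ, limsup (fun n => birkhoffSum f g n x / n) atTop ≤ ∫ x, g x ∂μ := by
  have hne : Nonempty X := by
    by_contra h
    rw [not_nonempty_iff] at h
    have h1 := measure_univ (μ := μ)
    rw [Set.univ_eq_empty_iff.mpr h, measure_empty] at h1
    exact zero_ne_one h1
  obtain ⟨x₀⟩ := hne
  have hC0 : 0 ≤ C := le_trans (abs_nonneg _) (hC x₀)
  have hmS : ∀ n, Measurable (fun x => birkhoffSum f g n x / (n:ℝ)) := fun n =>
    (measurable_birkhoffSum hf.toMeasurePreserving.measurable hg n).div_const _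
  set β : X → ℝ := fun x => limsup (fun n => birkhoffSum f g n x / n) atTop with hβ_def
  have hβm : Measurable β := Measurable.limsup hmS
  -- invariance of β
  have hβinv : ∀ x, β (f x) = β x := by
    intro x
    have hshift : limsup (fun n : ℕ => birkhoffSum f g (n + 1) x / ((n:ℝ) + 1)) atTop
        = limsup (fun n : ℕ => birkhoffSum f g n x / (n:ℝ)) atTop := by
      have h := limsup_nat_add (fun n => birkhoffSum f g n x / (n:ℝ)) 1
      simp only [Nat.cast_add, Nat.cast_one] at h
      exact h
    show limsup (fun n : ℕ => birkhoffSum f g n (f x) / (n:ℝ)) atTop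
        = limsup (fun n : ℕ => birkhoffSum f g n x / (n:ℝ)) atTop
    rw [← hshift]
    refine limsup_eq_limsup_of_tendsto_sub (B := C)
      (fun n => abs_birkhoffAvg_le hC hC0 n (f x))
      (fun n => by simpa [Nat.cast_add, Nat.cast_one] using
        abs_birkhoffAvg_le (f := f) hC hC0 (n + 1) x) ?_
    have hbound : ∀ n : ℕ, 1 ≤ n →
        |birkhoffSum f g n (f x) / n - birkhoffSum f g (n + 1) x / (n + 1)| ≤ 2 * C / n := by
      intro n hn
      have hn' : (0:ℝ) < n := by exact_mod_cast hn
      have hn1 : (0:ℝ) < (n:ℝ) + 1 := by linarith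
      have hS : birkhoffSum f g n (f x) = birkhoffSum f g (n + 1) x - g x := by
        rw [birkhoffSum_succ' f g n x]; ring
      set S := birkhoffSum f g (n + 1) x with hSdef
      have hSb : |S| ≤ ((n:ℝ) + 1) * C := by
        have := abs_birkhoffSum_le (f := f) hC (n + 1) x
        rw [← hSdef] at this
        push_cast at this
        linarith
      have hexp : birkhoffSum f g n (f x) / n - S / ((n:ℝ) + 1)
          = (S - g x * ((n:ℝ) + 1)) / ((n:ℝ) * ((n:ℝ) + 1)) := by
        rw [hS]
        field_simp
        ring
      rw [hexp]
      rw [abs_div, abs_of_pos (by positivity : (0:ℝ) < (n:ℝ) * ((n:ℝ)+1))]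
      rw [div_le_div_iff₀ (by positivity) hn']
      have h1 : |S - g x * ((n:ℝ) + 1)| ≤ 2 * C * ((n:ℝ) + 1) := by
        calc |S - g x * ((n:ℝ) + 1)| ≤ |S| + |g x| * ((n:ℝ) + 1) := by
              have := abs_sub (S) (g x * ((n:ℝ) + 1))
              have h2 : |g x * ((n:ℝ)+1)| = |g x| * ((n:ℝ)+1) := by
                rw [abs_mul, abs_of_pos hn1]
              calc |S - g x * ((n:ℝ) + 1)| ≤ |S| + |g x * ((n:ℝ)+1)| := abs_sub _ _
                _ = |S| + |g x| * ((n:ℝ)+1) := by rw [h2]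
          _ ≤ ((n:ℝ) + 1) * C + C * ((n:ℝ) + 1) := by
              have := hC x
              have : |g x| * ((n:ℝ)+1) ≤ C * ((n:ℝ)+1) := by nlinarith [hC x]
              linarith [hSb]
          _ = 2 * C * ((n:ℝ) + 1) := by ring
      calc |S - g x * ((n:ℝ)+1)| * (n:ℝ) ≤ 2 * C * ((n:ℝ)+1) * (n:ℝ) := by nlinarith
        _ = 2 * C * ((n:ℝ) * ((n:ℝ)+1)) := by ring
    refine squeeze_zero_norm' ?_ (tendsto_const_div_atTop_nhds_zero_nat (2 * C))
    filter_upwards [eventually_ge_atTop 1] with n hn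
    simpa [Real.norm_eq_abs] using hbound n hn
  obtain ⟨c, hc⟩ := hf.ae_eq_const_of_ae_eq_comp₀ hβm.nullMeasurable
    (Eventually.of_forall fun x => hβinv x)
  have hint_g : Integrable g μ := integrable_of_bound hg C hC
  have hcle : c ≤ ∫ x, g x ∂μ := by
    by_contra hlt
    push_neg at hlt
    set lam : ℝ := ((∫ x, g x ∂μ) + c) / 2 with hlam
    have hlam1 : ∫ x, g x ∂μ < lam := by rw [hlam]; linarith
    have hlam2 : lam < c := by rw [hlam]; linarith
    set h : X → ℝ := fun x => g x - lam with hh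
    have hhm : Measurable h := hg.sub measurable_const
    have hhC : ∀ x, |h x| ≤ C + |lam| := fun x => by
      rw [hh]
      calc |g x - lam| ≤ |g x| + |lam| := abs_sub _ _
        _ ≤ C + |lam| := by linarith [hC x]
    have hhS : ∀ n x, birkhoffSum f h n x = birkhoffSum f g n x - n * lam := by
      intro n x
      simp [hh, birkhoffSum, Finset.sum_sub_distrib, Finset.sum_const, Finset.card_range,
        nsmul_eq_mul]
    have hmax := maximal_ergodic hf.toMeasurePreserving hhm hhC
    set A := {x | ∃ n, 0 < birkhoffSum f h n x} with hA
    have hae : ∀ᵐ x ∂μ, x ∈ A := by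
      filter_upwards [hc] with x hx
      have hxc : β x = c := hx
      have hlt' : lam < limsup (fun n => birkhoffSum f g n x / (n:ℝ)) atTop := by
        rw [show limsup (fun n => birkhoffSum f g n x / (n:ℝ)) atTop = β x from rfl, hxc]
        exact hlam2
      have hbdd : IsBoundedUnder (· ≥ ·) atTop (fun n : ℕ => birkhoffSum f g n x / (n:ℝ)) :=
        isBoundedUnder_of ⟨-C, fun n => neg_le_of_abs_le (abs_birkhoffAvg_le hC hC0 n x)⟩
      have hfreq := frequently_lt_of_lt_limsup hbdd.isCoboundedUnder_le hlt'
      obtain ⟨n, hn1, hn2⟩ := (hfreq.and_eventually (eventually_ge_atTop 1)).exists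
      have hnpos : (0:ℝ) < n := by exact_mod_cast hn2
      refine ⟨n, ?_⟩
      rw [hhS]
      have := (lt_div_iff₀ hnpos).mp hn1
      nlinarith
    have hAA : μ.restrict A = μ := by
      have h1 : A =ᵐ[μ] Set.univ := by
        rw [Filter.eventuallyEq_set]
        filter_upwards [hae] with x hx
        simp [hx]
      calc μ.restrict A = μ.restrict Set.univ := Measure.restrict_congr_set h1
        _ = μ := Measure.restrict_univ
    rw [hAA] at hmax
    have hinth : ∫ x, h x ∂μ = (∫ x, g x ∂μ) - lam := by
      rw [hh, integral_sub hint_g (integrable_const lam)]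
      simp
    rw [hinth] at hmax
    linarith
  filter_upwards [hc] with x hx
  have hxc : β x = c := hx
  rw [show limsup (fun n => birkhoffSum f g n x / (n:ℝ)) atTop = β x from rfl, hxc]
  exact hcle

end Core

section Birk
variable {X : Type*} [MeasurableSpace X] {f : X → X} {g : X → ℝ}

/-- **Birkhoff pointwise ergodic theorem** for bounded measurable functions. -/
theorem ae_tendsto_birkhoff {μ : Measure X} [IsProbabilityMeasure μ]
    (hf : Ergodic f μ) (hg : Measurable g) {C : ℝ} (hC : ∀ x, |g x| ≤ C) :
    ∀ᵐ x ∂μ, Tendsto (fun n => birkhoffSum f g n x / (n:ℝ)) atTop (nhds (∫ x, g x ∂μ)) := by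
  have hne : Nonempty X := by
    by_contra h
    rw [not_nonempty_iff] at h
    have h1 := measure_univ (μ := μ)
    rw [Set.univ_eq_empty_iff.mpr h, measure_empty] at h1
    exact zero_ne_one h1
  obtain ⟨x₀⟩ := hne
  have hC0 : 0 ≤ C := le_trans (abs_nonneg _) (hC x₀)
  have hup := ae_limsup_birkhoff_le hf hg hC
  have hCneg : ∀ x, |(fun y => -g y) x| ≤ C := fun x => by simpa using hC x
  have hdown := ae_limsup_birkhoff_le hf hg.neg hCneg
  have hSneg : ∀ (n : ℕ) (x : X), birkhoffSum f (fun y => -g y) n x = -birkhoffSum f g n x := by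
    intro n x; simp [birkhoffSum]
  filter_upwards [hup, hdown] with x h1 h2
  have h2' : limsup (fun n : ℕ => -(birkhoffSum f g n x / (n:ℝ))) atTop ≤ -∫ x, g x ∂μ := by
    have e : (fun n : ℕ => birkhoffSum f (fun y => -g y) n x / (n:ℝ))
        = fun n : ℕ => -(birkhoffSum f g n x / (n:ℝ)) := by
      funext n; rw [hSneg]; ring
    have hi : ∫ x, (fun y => -g y) x ∂μ = -∫ x, g x ∂μ := by
      simpa using integral_neg g
    change limsup (fun n : ℕ => birkhoffSum f (fun y => -g y) n x / (n:ℝ)) atTop ≤ ∫ x, (fun y => -g y) x ∂μ at h2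
    rw [e, hi] at h2
    exact h2
  have hb_le : IsBoundedUnder (· ≤ ·) atTop (fun n : ℕ => birkhoffSum f g n x / (n:ℝ)) :=
    isBoundedUnder_of ⟨C, fun n => le_of_abs_le (abs_birkhoffAvg_le hC hC0 n x)⟩
  have hb_ge : IsBoundedUnder (· ≥ ·) atTop (fun n : ℕ => birkhoffSum f g n x / (n:ℝ)) :=
    isBoundedUnder_of ⟨-C, fun n => neg_le_of_abs_le (abs_birkhoffAvg_le hC hC0 n x)⟩
  have hbneg_le : IsBoundedUnder (· ≤ ·) atTop (fun n : ℕ => -(birkhoffSum f g n x / (n:ℝ))) :=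
    isBoundedUnder_of ⟨C, fun n => by
      have := neg_le_of_abs_le (abs_birkhoffAvg_le (f := f) (g := g) hC hC0 n x); linarith⟩
  have hliminf : (∫ x, g x ∂μ) ≤ liminf (fun n : ℕ => birkhoffSum f g n x / (n:ℝ)) atTop := by
    refine le_of_forall_pos_le_add fun ε hε => ?_
    have hev : ∀ᶠ n in atTop, -(birkhoffSum f g n x / (n:ℝ)) < -(∫ x, g x ∂μ) + ε :=
      eventually_lt_of_limsup_lt (lt_of_le_of_lt h2' (by linarith)) hbneg_le
    have hev' : ∀ᶠ n in atTop, (∫ x, g x ∂μ) - ε ≤ birkhoffSum f g n x / (n:ℝ) := by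
      filter_upwards [hev] with n hn; linarith
    have := le_liminf_of_le hb_le.isCoboundedUnder_ge hev'
    linarith
  exact tendsto_of_le_liminf_of_limsup_le hliminf h1 hb_le hb_ge

end Birk

/-- In an ergodic system with `μ(E) > 0`, the set of points `x` where
`liminf m_n(x)/n < 1 - 4ε` (with `m_n(x) = max{0 ≤ k < n : f^k x ∈ E} ∪ {0}` the last visit
time) must have measure zero: no such set of positive measure exists. -/
theorem no_positive_measure_set_of_small_visit_liminf
    {X : Type*} [MeasurableSpace X] {μ : Measure X} [IsProbabilityMeasure μ]
    {f : X → X} (hf : Ergodic f μ) {E : Set X} (hE : MeasurableSet E) (hμE : 0 < μ E)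
    (ε : ℝ) (hε : 0 < ε) (hε' : ε < 1 / 4)
    (K : Set X) (hK : MeasurableSet K)
    (hliminf : ∀ x ∈ K,
      Filter.liminf
        (fun n : ℕ =>
          ((((Finset.range n).filter (fun k => f^[k] x ∈ E)).sup id : ℕ) : ℝ) / (n : ℝ))
        atTop < 1 - 4 * ε) :
    μ K = 0 := by
  set g : X → ℝ := E.indicator fun _ => 1 with hgdef
  have hgm : Measurable g := measurable_const.indicator hE
  have hgC : ∀ x, |g x| ≤ 1 := fun x => by
    rw [hgdef]; by_cases hx : x ∈ E <;> simp [Set.indicator_apply, hx]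
  have hint : ∫ x, g x ∂μ = (μ E).toReal := by
    rw [hgdef, integral_indicator_const (1:ℝ) hE]; simp; rfl
  set e := (μ E).toReal with he_def
  have he : 0 < e := ENNReal.toReal_pos hμE.ne' (measure_ne_top μ E)
  have hcount : ∀ (x : X) (n : ℕ),
      birkhoffSum f g n x = (((Finset.range n).filter fun k => f^[k] x ∈ E).card : ℝ) := by
    intro x n
    rw [hgdef]
    simp only [birkhoffSum, Set.indicator_apply]
    rw [Finset.sum_boole]
  have hbirk := ae_tendsto_birkhoff hf hgm hgC
  rw [hint] at hbirk
  refine measure_eq_zero_iff_ae_notMem.mpr ?_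
  filter_upwards [hbirk] with x hT hxK
  have hl := hliminf x hxK
  set cnt : ℕ → ℕ := fun n => ((Finset.range n).filter fun k => f^[k] x ∈ E).card with hcnt
  set M : ℕ → ℕ := fun n => ((Finset.range n).filter fun k => f^[k] x ∈ E).sup id with hM
  have hT' : Tendsto (fun n : ℕ => (cnt n : ℝ) / n) atTop (nhds e) := by
    have heq : (fun n : ℕ => (cnt n : ℝ) / n) = fun n : ℕ => birkhoffSum f g n x / n :=
      funext fun n => by rw [hcnt]; rw [hcount]
    rw [heq]; exact hT
  set c : ℝ := 1 - 4 * ε with hc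
  have hc0 : 0 < c := by rw [hc]; linarith
  have hc1 : c < 1 := by rw [hc]; linarith
  have hMle : ∀ n, M n ≤ n := fun n => Finset.sup_le fun k hk => by
    have h := Finset.mem_range.mp (Finset.mem_filter.mp hk).1
    simpa using h.le
  have hMb : IsBoundedUnder (· ≤ ·) atTop (fun n : ℕ => ((M n : ℕ) : ℝ) / n) :=
    isBoundedUnder_of ⟨1, fun n => by
      rcases Nat.eq_zero_or_pos n with rfl | hn
      · simp
      · rw [div_le_one (by exact_mod_cast hn : (0:ℝ) < n)]
        exact_mod_cast hMle n⟩
  have hfreq : ∃ᶠ n in atTop, ((M n : ℝ)) / n < c :=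
    frequently_lt_of_liminf_lt hMb.isCoboundedUnder_ge hl
  by_cases hbound : ∃ B : ℕ, ∀ k, f^[k] x ∈ E → k < B
  · obtain ⟨B, hB⟩ := hbound
    have hcntB : ∀ n, cnt n ≤ B := fun n => by
      have hsub : ((Finset.range n).filter fun k => f^[k] x ∈ E) ⊆ Finset.range B := by
        intro k hk
        rw [Finset.mem_range]
        exact hB k (Finset.mem_filter.mp hk).2
      simpa using Finset.card_le_card hsub
    have h0 : Tendsto (fun n : ℕ => (cnt n : ℝ) / n) atTop (nhds 0) := by
      refine squeeze_zero' (Eventually.of_forall fun n => by positivity)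
        (Eventually.of_forall fun n => ?_) (tendsto_const_div_atTop_nhds_zero_nat (B : ℝ))
      rcases Nat.eq_zero_or_pos n with rfl | hn
      · simp
      · have hn' : (0:ℝ) < n := by exact_mod_cast hn
        gcongr
        exact_mod_cast hcntB n
    have : e = 0 := tendsto_nhds_unique hT' h0
    linarith
  · push_neg at hbound
    have hMtend : Tendsto M atTop atTop := by
      refine tendsto_atTop.mpr fun b => ?_
      obtain ⟨k, hk1, hk2⟩ := hbound b
      filter_upwards [eventually_ge_atTop (k + 1)] with n hn
      have hkmem : k ∈ (Finset.range n).filter fun j => f^[j] x ∈ E := by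
        rw [Finset.mem_filter, Finset.mem_range]
        exact ⟨lt_of_lt_of_le (Nat.lt_succ_self k) hn, hk1⟩
      calc b ≤ k := hk2
        _ ≤ M n := Finset.le_sup (f := id) hkmem
    obtain ⟨φ, hφmono, hφ⟩ :=
      extraction_of_frequently_atTop (hfreq.and_eventually (eventually_ge_atTop 1))
    set m : ℕ → ℕ := fun j => M (φ j) + 1 with hm
    have hφpos : ∀ j, (0:ℝ) < φ j := fun j => by exact_mod_cast (hφ j).2
    have hMlt : ∀ j, (M (φ j) : ℝ) < c * φ j := fun j => by
      have h1 := (hφ j).1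
      rw [div_lt_iff₀ (hφpos j)] at h1
      linarith [h1]
    have hmn : ∀ j, m j ≤ φ j := by
      intro j
      have h2 : (M (φ j) : ℝ) < φ j := lt_of_lt_of_le (hMlt j) (by nlinarith [hφpos j])
      have h3 : M (φ j) < φ j := by exact_mod_cast h2
      simp only [hm]
      omega
    have hkey : ∀ j, cnt (φ j) = cnt (m j) := by
      intro j
      have hsets : (Finset.range (φ j)).filter (fun k => f^[k] x ∈ E)
          = (Finset.range (m j)).filter (fun k => f^[k] x ∈ E) := by
        apply Finset.ext
        intro k
        simp only [Finset.mem_filter, Finset.mem_range]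
        constructor
        · rintro ⟨hk1, hk2⟩
          refine ⟨?_, hk2⟩
          have hmem : k ∈ (Finset.range (φ j)).filter fun j' => f^[j'] x ∈ E := by
            rw [Finset.mem_filter, Finset.mem_range]; exact ⟨hk1, hk2⟩
          have hkM : k ≤ M (φ j) := Finset.le_sup (f := id) hmem
          simp only [hm]
          omega
        · rintro ⟨hk1, hk2⟩
          exact ⟨lt_of_lt_of_le hk1 (hmn j), hk2⟩
      rw [hcnt]
      simp only [hsets]
    have hφtop : Tendsto φ atTop atTop := hφmono.tendsto_atTop
    have hmtop : Tendsto m atTop atTop :=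
      tendsto_atTop_mono (fun j => Nat.le_succ _) (hMtend.comp hφtop)
    have h1 : Tendsto (fun j => (cnt (m j) : ℝ) / (m j)) atTop (nhds e) := hT'.comp hmtop
    have h2 : Tendsto (fun j => c + 1 / (φ j : ℝ)) atTop (nhds (c + 0)) :=
      tendsto_const_nhds.add (tendsto_one_div_atTop_nhds_zero_nat.comp hφtop)
    have hRHS : Tendsto (fun j => ((cnt (m j) : ℝ) / (m j)) * (c + 1 / (φ j : ℝ)))
        atTop (nhds (e * (c + 0))) := h1.mul h2
    have hLHS : Tendsto (fun j => (cnt (φ j) : ℝ) / (φ j)) atTop (nhds e) := hT'.comp hφtop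
    have hle : ∀ j, (cnt (φ j) : ℝ) / (φ j) ≤ ((cnt (m j) : ℝ) / (m j)) * (c + 1 / (φ j : ℝ)) := by
      intro j
      have hmpos : (0:ℝ) < m j := by
        rw [hm]; push_cast; positivity
      have hratio : (m j : ℝ) / (φ j) ≤ c + 1 / (φ j : ℝ) := by
        rw [div_le_iff₀ (hφpos j)]
        have := hMlt j
        have hmval : (m j : ℝ) = (M (φ j) : ℝ) + 1 := by rw [hm]; push_cast; ring
        rw [hmval]
        have hφj := hφpos j
        field_simp
        nlinarith
      calc (cnt (φ j) : ℝ) / (φ j) = (cnt (m j) : ℝ) / (φ j) := by rw [hkey j]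
        _ = ((cnt (m j) : ℝ) / (m j)) * ((m j : ℝ) / (φ j)) := by
            field_simp
        _ ≤ ((cnt (m j) : ℝ) / (m j)) * (c + 1 / (φ j : ℝ)) :=
            mul_le_mul_of_nonneg_left hratio (by positivity)
    have hfin : e ≤ e * (c + 0) := le_of_tendsto_of_tendsto' hLHS hRHS hle
    rw [add_zero] at hfin
    nlinarith
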